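/- Let L ⊂ ℝ^N be a full-rank lattice (a discrete cocompact subgroup) and let U ⊂ ℝ^N be a nonempty open cone (closed under multiplication by positive reals). Then U contains a primitive vector of L, i.e., a vector l ∈ L that can be extended to a ℤ-basis of L. -/

import Mathlib

open Module

lemma bezout_fin {n : ℕ} (c : Fin n → ℤ) (h : Finset.univ.gcd c = 1) :
    ∃ a : Fin n → ℤ, ∑ i, a i * c i = 1 := by
  classical
  set I : Ideal ℤ := Ideal.span (Set.range c) with hI
  have hgen : ∀ i, (Submodule.IsPrincipal.generator I) ∣ c i := by
    intro i
    rw [← Ideal.mem_span_singleton, Ideal.span_singleton_generator]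
    exact Ideal.subset_span (Set.mem_range_self i)
  have hdvd : (Submodule.IsPrincipal.generator I) ∣ 1 := by
    rw [← h]; exact Finset.dvd_gcd fun i _ => hgen i
  have hItop : I = ⊤ := by
    rw [← Ideal.span_singleton_generator I]
    exact Ideal.span_singleton_eq_top.mpr (isUnit_of_dvd_one hdvd)
  have h1 : (1 : ℤ) ∈ I := hItop ▸ Submodule.mem_top
  rw [hI] at h1
  obtain ⟨a, ha⟩ := (Submodule.mem_span_range_iff_exists_fun ℤ).mp h1
  exact ⟨a, by simpa [smul_eq_mul] using ha⟩

lemma exists_basis_of_dual_one {R M : Type*} [CommRing R] [IsDomain R]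
    [IsPrincipalIdealRing R] [AddCommGroup M] [Module R M]
    [Module.Free R M] [Module.Finite R M] {N : ℕ} (hn : Module.finrank R M = N)
    (v : M) (f : M →ₗ[R] R) (hfv : f v = 1) :
    ∃ (b : Basis (Fin N) R M) (i : Fin N), b i = v := by
  classical
  set K := LinearMap.ker f with hK
  have hmem : ∀ z : M, z - f z • v ∈ K := by
    intro z
    simp [hK, LinearMap.mem_ker, hfv, mul_comm]
  haveI : IsNoetherian R M := isNoetherian_of_isNoetherianRing_of_finite R M
  haveI : Module.Finite R K := Module.Finite.iff_fg.mpr (IsNoetherian.noetherian K)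
  haveI : Module.Free R K := by infer_instance
  let kb0 := Module.Free.chooseBasis R K
  let m := Fintype.card (Module.Free.ChooseBasisIndex R ↥K)
  let kb : Basis (Fin m) R K := kb0.reindex (Fintype.equivFin _)
  have hli : ∀ (c : R), ∀ x ∈ K, c • v + x = 0 → c = 0 := by
    intro c x hx h
    have := congrArg f h
    simpa [hfv, LinearMap.mem_ker.mp hx] using this
  have hsp : ∀ z : M, ∃ c : R, z + c • v ∈ K := by
    intro z
    exact ⟨-f z, by simpa [neg_smul, sub_eq_add_neg] using hmem z⟩
  let B : Basis (Fin (m+1)) R M := Basis.mkFinCons v kb hli hsp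
  have hmN : m + 1 = N := by rw [← hn, finrank_eq_card_basis B, Fintype.card_fin]
  refine ⟨B.reindex (finCongr hmN), finCongr hmN 0, ?_⟩
  rw [Basis.reindex_apply]
  have h0 : (finCongr hmN).symm (finCongr hmN 0) = 0 := Equiv.symm_apply_apply _ _
  rw [h0]
  have hcoe := Basis.coe_mkFinCons v kb hli hsp
  calc B 0 = (Fin.cons v ((↑) ∘ kb) : Fin (m+1) → M) 0 := by rw [← hcoe]
    _ = v := rfl

/-- A nonempty open cone in `ℝ^N` contains a primitive vector of any full-rank lattice `L`,
i.e. a vector that is a member of some `ℤ`-basis of `L`. -/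
theorem open_cone_contains_primitive_vector {N : ℕ} (hN : 0 < N)
    (L : Submodule ℤ (EuclideanSpace ℝ (Fin N)))
    [DiscreteTopology L] [IsZLattice ℝ L]
    (U : Set (EuclideanSpace ℝ (Fin N))) (hUo : IsOpen U) (hUne : U.Nonempty)
    (hUcone : ∀ x ∈ U, ∀ t : ℝ, 0 < t → t • x ∈ U) :
    ∃ l : L, (l : EuclideanSpace ℝ (Fin N)) ∈ U ∧
      ∃ (b : Basis (Fin N) ℤ L) (i : Fin N), b i = l := by
  classical
  haveI := ZLattice.module_free ℝ L
  haveI := ZLattice.module_finite ℝ L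
  have hrank : Module.finrank ℤ L = N := by
    rw [ZLattice.rank ℝ L, finrank_euclideanSpace_fin]
  let b : Basis (Fin N) ℤ L := (Module.Free.chooseBasis ℤ L).reindex
    (Fintype.equivFinOfCardEq (by rw [← Module.finrank_eq_card_chooseBasisIndex, hrank]))
  let B := b.ofZLatticeBasis ℝ L
  set ψ : (Fin N → ℝ) → EuclideanSpace ℝ (Fin N) := fun y => B.equivFunL.symm y with hψ
  set V : Set (Fin N → ℝ) := ψ ⁻¹' U with hVdef
  have hVo : IsOpen V := B.equivFunL.symm.continuous.isOpen_preimage U hUo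
  -- find a nonzero point of V
  have hVne : ∃ x ∈ V, x ≠ 0 := by
    obtain ⟨u0, hu0⟩ := hUne
    have hx0V : B.equivFunL u0 ∈ V := by
      simp [hVdef, hψ, ContinuousLinearEquiv.symm_apply_apply, hu0]
    by_cases h0 : B.equivFunL u0 = 0
    · obtain ⟨ε, hε, hball⟩ := Metric.isOpen_iff.mp hVo _ hx0V
      rw [h0] at hball
      set i0 : Fin N := ⟨0, hN⟩
      set x1 : Fin N → ℝ := fun i => if i = i0 then ε/2 else 0 with hx1
      have hx1V : x1 ∈ V := by
        apply hball
        rw [Metric.mem_ball, dist_pi_lt_iff hε]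
        intro i
        rw [Real.dist_eq, hx1]
        simp only [Pi.zero_apply, sub_zero]
        rcases eq_or_ne i i0 with h | h
        · rw [if_pos h, abs_of_pos (half_pos hε)]
          linarith
        · rw [if_neg h]
          simpa using hε
      refine ⟨x1, hx1V, ?_⟩
      intro h
      have h2 : x1 i0 = 0 := by rw [h]; rfl
      rw [hx1] at h2
      simp at h2
      linarith
    · exact ⟨_, hx0V, h0⟩
  obtain ⟨x, hxV, hx0⟩ := hVne
  obtain ⟨ε, hε, hball⟩ := Metric.isOpen_iff.mp hVo x hxV
  obtain ⟨i0, hi0⟩ : ∃ i, x i ≠ 0 := by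
    by_contra h
    push_neg at h
    exact hx0 (funext fun i => h i)
  set δ : ℝ := min ε |x i0| with hδdef
  have hδ : 0 < δ := lt_min hε (abs_pos.mpr hi0)
  have hqex : ∀ i, ∃ qi : ℚ, |x i - (qi : ℝ)| < δ := fun i => exists_rat_near (x i) hδ
  choose q hq using hqex
  have hqV : (fun i => (q i : ℝ)) ∈ V := by
    apply hball
    rw [Metric.mem_ball, dist_pi_lt_iff hε]
    intro i
    rw [Real.dist_eq, abs_sub_comm]
    exact lt_of_lt_of_le (hq i) (min_le_left _ _)
  have hqi0 : q i0 ≠ 0 := by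
    intro h
    have h3 := hq i0
    rw [h] at h3
    simp only [Rat.cast_zero, sub_zero] at h3
    have h2 : δ ≤ |x i0| := min_le_right _ _
    linarith
  -- clear denominators
  set d : ℕ := ∏ i, (q i).den with hd
  have hdpos : 0 < d := Finset.prod_pos fun i _ => (q i).pos
  set c : Fin N → ℤ := fun i => ((d / (q i).den : ℕ) : ℤ) * (q i).num with hc
  have hcq : ∀ i, ((c i : ℚ)) = (d : ℚ) * (q i : ℚ) := by
    intro i
    have hdvd : (q i).den ∣ d := Finset.dvd_prod_of_mem _ (Finset.mem_univ i)
    obtain ⟨k, hk⟩ := hdvd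
    have hden : ((q i).den : ℚ) ≠ 0 := Nat.cast_ne_zero.mpr (q i).pos.ne'
    have hdiv : d / (q i).den = k := by rw [hk]; exact Nat.mul_div_cancel_left _ (q i).pos
    have hnum : ((q i).num : ℚ) = (q i : ℚ) * ((q i).den : ℚ) := by
      rw [Rat.mul_den_eq_num]
    show ((((d / (q i).den : ℕ) : ℤ) * (q i).num : ℤ) : ℚ) = _
    rw [hdiv, hk]
    push_cast
    rw [hnum]
    ring
  have hci0 : c i0 ≠ 0 := by
    intro h
    have := hcq i0
    rw [h] at this
    simp at this
    rcases this with h' | h'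
    · exact absurd h' (Nat.cast_ne_zero.mpr hdpos.ne')
    · exact hqi0 h'
  -- divide by gcd
  set g : ℤ := Finset.univ.gcd c with hg
  have hgdvd : ∀ i, g ∣ c i := fun i => Finset.gcd_dvd (Finset.mem_univ i)
  have hgne : g ≠ 0 := fun h => hci0 (Finset.gcd_eq_zero_iff.mp h i0 (Finset.mem_univ i0))
  have hgnonneg : 0 ≤ g := by
    have : |g| = g := by
      rw [Int.abs_eq_normalize, hg, Finset.normalize_gcd]
    rw [← this]; exact abs_nonneg g
  have hgpos : 0 < g := lt_of_le_of_ne hgnonneg (Ne.symm hgne)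
  set c' : Fin N → ℤ := fun i => c i / g with hc'
  have hgc : ∀ i, c i = g * c' i := fun i => (Int.mul_ediv_cancel' (hgdvd i)).symm
  have hgcd1 : Finset.univ.gcd c' = 1 := by
    rw [hc', hg]
    exact Finset.gcd_div_eq_one (Finset.mem_univ i0) hci0
  -- the lattice vector
  set vL : L := ∑ i, c' i • b i with hvL
  -- its image in ℝ^N
  have hcoev : (vL : EuclideanSpace ℝ (Fin N)) = ∑ i, (c' i : ℝ) • B i := by
    rw [hvL]
    push_cast
    congr 1
    funext i
    rw [← b.ofZLatticeBasis_apply ℝ L]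
    rw [← Int.cast_smul_eq_zsmul ℝ]
  -- ψ of integer coords equals g • vL
  have hψc : ψ (fun i => (c i : ℝ)) = (g : ℝ) • (vL : EuclideanSpace ℝ (Fin N)) := by
    have h1 : ψ (fun i => (c i : ℝ)) = ∑ i, (c i : ℝ) • B i := by
      rw [hψ]
      show B.equivFun.symm _ = _
      rw [Basis.equivFun_symm_apply]
    rw [h1, hcoev, Finset.smul_sum]
    congr 1
    funext i
    rw [hgc i]
    push_cast
    rw [mul_smul]
  -- ψ of integer coords is in U
  have hcU : ψ (fun i => (c i : ℝ)) ∈ U := by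
    have h2 : (fun i => (c i : ℝ)) = (d : ℝ) • (fun i => (q i : ℝ)) := by
      funext i
      have := hcq i
      have : ((c i : ℚ) : ℝ) = (((d : ℚ) * (q i : ℚ) : ℚ) : ℝ) := by rw [this]
      push_cast at this
      simpa using this
    rw [h2, hψ]
    simp only [map_smul]
    exact hUcone _ hqV _ (by exact_mod_cast hdpos)
  have hvLU : (vL : EuclideanSpace ℝ (Fin N)) ∈ U := by
    have := hUcone _ (hψc ▸ hcU) ((g : ℝ)⁻¹) (by positivity)
    rwa [smul_smul, inv_mul_cancel₀ (by exact_mod_cast hgne), one_smul] at this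
  -- coordinates of vL
  have hrepr : ∀ j, b.repr vL j = c' j := by
    intro j
    rw [hvL]
    simp only [map_sum, map_smul, Basis.repr_self]
    rw [Finset.sum_apply']
    simp [Finsupp.smul_apply, Finsupp.single_apply]
  -- Bezout
  obtain ⟨a, ha⟩ := bezout_fin c' hgcd1
  set f : L →ₗ[ℤ] ℤ := ∑ i, a i • b.coord i with hf
  have hfv : f vL = 1 := by
    rw [hf]
    rw [LinearMap.sum_apply]
    simp only [LinearMap.smul_apply, Basis.coord_apply, hrepr, smul_eq_mul]
    exact ha
  obtain ⟨b', i, hb'⟩ := exists_basis_of_dual_one hrank vL f hfv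
  exact ⟨vL, hvLU, b', i, hb'⟩
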